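/- Let Δ be a Jordan derivation of R = R_n(K,J) (n ≥ 4, K 2-torsion free) such that for each i the i-th column and the (i+1,1) entry of Δ(e_{i+1,i}) vanish. Then Δ(e_{2,1}) = 0, Δ(e_{n,n−1}) = 0, Δ(e_{i+1,i}) = Δ^{i+1,i}_{n,1}(1) e_{n,1} for 1 < i < n−1, and Δ(e_{i,j}) = 0 whenever i − j > 1. -/

import Mathlib

open Matrix

/-- `R_n(K,J)`: the non-unital subring of `n × n` matrices over `K` whose entries on and
above the main diagonal lie in the two-sided ideal `J`. -/
def Rset (n : ℕ) (K : Type) [Ring K] (J : TwoSidedIdeal K) :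
    NonUnitalSubring (Matrix (Fin n) (Fin n) K) where
  carrier := {M | ∀ i j : Fin n, i ≤ j → M i j ∈ J}
  zero_mem' := by intro i j _; simp [J.zero_mem]
  add_mem' := by intro a b ha hb i j h; exact J.add_mem (ha i j h) (hb i j h)
  neg_mem' := by intro a ha i j h; exact J.neg_mem (ha i j h)
  mul_mem' := by
    intro a b ha hb i j h
    show (∑ k, a i k * b k j) ∈ J
    refine J.finsetSum_mem _ _ fun k _ => ?_
    rcases le_or_gt i k with hik | hik
    · exact J.mul_mem_right _ _ (ha i k hik)
    · exact J.mul_mem_left _ _ (hb k j (le_trans hik.le h))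

lemma stdBasis_mem {n : ℕ} {K : Type} [Ring K] {J : TwoSidedIdeal K}
    {i j : Fin n} {y : K} (h : i ≤ j → y ∈ J) :
    Matrix.single i j y ∈ Rset n K J := by
  intro a b hab
  rw [Matrix.single]
  by_cases hc : i = a ∧ j = b
  · obtain ⟨rfl, rfl⟩ := hc
    simpa using h hab
  · simp [Matrix.of_apply, if_neg hc, J.zero_mem]

lemma stdBasis_mem_lower {n : ℕ} {K : Type} [Ring K] {J : TwoSidedIdeal K}
    {i j : Fin n} (h : j < i) (y : K) :
    Matrix.single i j y ∈ Rset n K J :=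
  stdBasis_mem fun hle => absurd hle (not_le.mpr h)

lemma E_apply {n : ℕ} {K : Type} [Ring K] (i j s t : Fin n) (c : K) :
    Matrix.single i j c s t = if i = s ∧ j = t then c else 0 := rfl

lemma E_mul_apply {n : ℕ} {K : Type} [Ring K] (M : Matrix (Fin n) (Fin n) K) (i j s t : Fin n) :
    (Matrix.single i j (1:K) * M) s t = if s = i then M j t else 0 := by
  by_cases h : s = i
  · subst h; simp
  · simp [h]

lemma mul_E_apply {n : ℕ} {K : Type} [Ring K] (M : Matrix (Fin n) (Fin n) K) (i j s t : Fin n) :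
    (M * Matrix.single i j (1:K)) s t = if t = j then M s i else 0 := by
  by_cases h : t = j
  · subst h; simp
  · simp [h]

/-- the subdiagonal matrix unit `e_{a+1,a}` as an element of `R_n(K,J)`. -/
def fsub (n : ℕ) (K : Type) [Ring K] (J : TwoSidedIdeal K) (a : ℕ) (ha : a + 1 < n) :
    ↥(Rset n K J) :=
  ⟨Matrix.single ⟨a+1, ha⟩ ⟨a, Nat.lt_of_succ_lt ha⟩ 1,
    stdBasis_mem_lower (Fin.mk_lt_mk.mpr (by omega)) 1⟩

/-- the matrix unit `e_{a+2,a}` as an element of `R_n(K,J)`. -/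
def gsub (n : ℕ) (K : Type) [Ring K] (J : TwoSidedIdeal K) (a : ℕ) (h2 : a + 1 + 1 < n) :
    ↥(Rset n K J) :=
  ⟨Matrix.single ⟨a+1+1, h2⟩ ⟨a, Nat.lt_of_succ_lt (Nat.lt_of_succ_lt h2)⟩ 1,
    stdBasis_mem_lower (Fin.mk_lt_mk.mpr (by omega)) 1⟩

/-- the image of `e_{a+1,a}` under `Δ`, as a matrix. -/
abbrev Dmat (n : ℕ) (K : Type) [Ring K] (J : TwoSidedIdeal K)
    (Δ : ↥(Rset n K J) → ↥(Rset n K J)) (a : ℕ) (ha : a + 1 < n) :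
    Matrix (Fin n) (Fin n) K := ↑(Δ (fsub n K J a ha))

lemma fsub_val (n : ℕ) (K : Type) [Ring K] (J : TwoSidedIdeal K) (a : ℕ) (ha : a + 1 < n) :
    (fsub n K J a ha : Matrix (Fin n) (Fin n) K)
      = Matrix.single (⟨a+1, ha⟩ : Fin n) ⟨a, Nat.lt_of_succ_lt ha⟩ 1 := rfl

lemma gsub_val (n : ℕ) (K : Type) [Ring K] (J : TwoSidedIdeal K) (a : ℕ) (h2 : a + 1 + 1 < n) :
    (gsub n K J a h2 : Matrix (Fin n) (Fin n) K)
      = Matrix.single (⟨a+1+1, h2⟩ : Fin n)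
          ⟨a, Nat.lt_of_succ_lt (Nat.lt_of_succ_lt h2)⟩ 1 := rfl

section JDlemmas

variable {n : ℕ} {K : Type} [Ring K] {J : TwoSidedIdeal K}
  (Δ : ↥(Rset n K J) → ↥(Rset n K J))

/-- abbreviation for the `anti` hypothesis -/
abbrev AntiP : Prop := ∀ x y : ↥(Rset n K J),
  (x : Matrix (Fin n) (Fin n) K) * y + (y : Matrix (Fin n) (Fin n) K) * x = 0 →
  (↑(Δ x) : Matrix (Fin n) (Fin n) K) * y + (y : Matrix (Fin n) (Fin n) K) * Δ x
    + (x : Matrix (Fin n) (Fin n) K) * Δ y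
    + (↑(Δ y) : Matrix (Fin n) (Fin n) K) * x = 0

/-- abbreviation for the `jordm` hypothesis -/
abbrev JordP : Prop := ∀ x y z : ↥(Rset n K J),
  (x : Matrix (Fin n) (Fin n) K) * y + (y : Matrix (Fin n) (Fin n) K) * x = z →
  (↑(Δ z) : Matrix (Fin n) (Fin n) K) =
    (↑(Δ x) : Matrix (Fin n) (Fin n) K) * y + (y : Matrix (Fin n) (Fin n) K) * Δ x
      + (x : Matrix (Fin n) (Fin n) K) * Δ y
      + (↑(Δ y) : Matrix (Fin n) (Fin n) K) * x

/-- abbreviation: column `a` of `Δ(e_{a+1,a})` vanishes -/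
abbrev ColAP : Prop := ∀ (a : ℕ) (ha : a + 1 < n) (s : Fin n),
  Dmat n K J Δ a ha s ⟨a, Nat.lt_of_succ_lt ha⟩ = 0



lemma jd_selfrel (htf : ∀ a : K, a + a = 0 → a = 0) (anti : AntiP Δ) (a : ℕ) (ha : a + 1 < n) (s t : Fin n) :
    (if t = (⟨a, Nat.lt_of_succ_lt ha⟩ : Fin n) then Dmat n K J Δ a ha s ⟨a+1, ha⟩ else 0)
    + (if s = (⟨a+1, ha⟩ : Fin n) then Dmat n K J Δ a ha ⟨a, Nat.lt_of_succ_lt ha⟩ t else 0)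
      = 0 := by
  have hz : (fsub n K J a ha : Matrix (Fin n) (Fin n) K) * (fsub n K J a ha)
      + (fsub n K J a ha : Matrix (Fin n) (Fin n) K) * (fsub n K J a ha) = 0 := by
    rw [fsub_val, Matrix.single_mul_single_of_ne
      (h := Fin.ne_of_val_ne (by omega : (a : ℕ) ≠ a + 1)), add_zero]
  have h := anti (fsub n K J a ha) (fsub n K J a ha) hz
  rw [fsub_val] at h
  have h2 := congrFun (congrFun h s) t
  simp only [Matrix.add_apply, Matrix.zero_apply, mul_E_apply, E_mul_apply] at h2
  apply htf
  refine Eq.trans ?_ h2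
  abel

lemma jd_colA1 (htf : ∀ a : K, a + a = 0 → a = 0) (anti : AntiP Δ) (colA : ColAP Δ) (a : ℕ) (ha : a + 1 < n) (s : Fin n) :
    Dmat n K J Δ a ha s ⟨a+1, ha⟩ = 0 := by
  by_cases hs : s = (⟨a+1, ha⟩ : Fin n)
  · have h := jd_selfrel Δ htf anti a ha s ⟨a, Nat.lt_of_succ_lt ha⟩
    rw [if_pos rfl, if_pos hs, colA, add_zero] at h
    exact h
  · have h := jd_selfrel Δ htf anti a ha s ⟨a, Nat.lt_of_succ_lt ha⟩
    rw [if_pos rfl, if_neg hs, add_zero] at h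
    exact h

lemma jd_rowA (htf : ∀ a : K, a + a = 0 → a = 0) (anti : AntiP Δ) (colA : ColAP Δ) (a : ℕ) (ha : a + 1 < n) (t : Fin n) :
    Dmat n K J Δ a ha ⟨a, Nat.lt_of_succ_lt ha⟩ t = 0 := by
  by_cases ht : t = (⟨a, Nat.lt_of_succ_lt ha⟩ : Fin n)
  · rw [ht]; exact colA a ha _
  · have h := jd_selfrel Δ htf anti a ha ⟨a+1, ha⟩ t
    rw [if_pos rfl, if_neg ht, zero_add] at h
    exact h

lemma jd_mixed (anti : AntiP Δ) (a : ℕ) (ha : a + 1 < n) (b : ℕ) (hb : b + 1 < n)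
    (hab : a + 2 ≤ b ∨ b + 2 ≤ a) (s t : Fin n) :
    (if t = (⟨b, Nat.lt_of_succ_lt hb⟩ : Fin n) then Dmat n K J Δ a ha s ⟨b+1, hb⟩ else 0)
    + (if s = (⟨b+1, hb⟩ : Fin n)
        then Dmat n K J Δ a ha ⟨b, Nat.lt_of_succ_lt hb⟩ t else 0)
    + (if s = (⟨a+1, ha⟩ : Fin n)
        then Dmat n K J Δ b hb ⟨a, Nat.lt_of_succ_lt ha⟩ t else 0)
    + (if t = (⟨a, Nat.lt_of_succ_lt ha⟩ : Fin n)
        then Dmat n K J Δ b hb s ⟨a+1, ha⟩ else 0) = 0 := by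
  have hz : (fsub n K J a ha : Matrix (Fin n) (Fin n) K) * (fsub n K J b hb)
      + (fsub n K J b hb : Matrix (Fin n) (Fin n) K) * (fsub n K J a ha) = 0 := by
    rw [fsub_val, fsub_val, Matrix.single_mul_single_of_ne
      (h := Fin.ne_of_val_ne (by omega : (a : ℕ) ≠ b + 1)),
      Matrix.single_mul_single_of_ne
      (h := Fin.ne_of_val_ne (by omega : (b : ℕ) ≠ a + 1)), add_zero]
  have h := anti (fsub n K J a ha) (fsub n K J b hb) hz
  rw [fsub_val, fsub_val] at h
  have h2 := congrFun (congrFun h s) t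
  simp only [Matrix.add_apply, Matrix.zero_apply, mul_E_apply, E_mul_apply] at h2
  exact h2

/-- abbreviation: the `(a+2,1)` entry of `Δ(e_{a+1,a})` vanishes -/
abbrev EntAP : Prop := ∀ (a : ℕ) (ha : a + 1 < n),
  Dmat n K J Δ a ha ⟨a+1, ha⟩ ⟨0, Nat.lt_of_le_of_lt (Nat.zero_le _) ha⟩ = 0

lemma jd_C1 (anti : AntiP Δ) (a : ℕ) (ha : a + 1 < n) (b : ℕ) (hb : b + 1 < n)
    (hab : a + 2 ≤ b ∨ b + 2 ≤ a) (s : Fin n) (hs1 : (s : ℕ) ≠ a + 1)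
    (hs2 : (s : ℕ) ≠ b + 1) :
    Dmat n K J Δ a ha s ⟨b+1, hb⟩ = 0 := by
  have h := jd_mixed Δ anti a ha b hb hab s ⟨b, Nat.lt_of_succ_lt hb⟩
  rw [if_pos rfl, if_neg (show s ≠ (⟨b+1, hb⟩ : Fin n) from fun hh => hs2 (by rw [hh])),
    if_neg (show s ≠ (⟨a+1, ha⟩ : Fin n) from fun hh => hs1 (by rw [hh])),
    if_neg (Fin.ne_of_val_ne (show b ≠ a by omega)), add_zero, add_zero, add_zero] at h
  exact h

lemma jd_C2 (anti : AntiP Δ) (colA : ColAP Δ) (a : ℕ) (ha : a + 1 < n) (b : ℕ)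
    (hb : b + 1 < n) (hab : a + 2 ≤ b ∨ b + 2 ≤ a) (t : Fin n) (ht : (t : ℕ) ≠ b) :
    Dmat n K J Δ a ha ⟨b, Nat.lt_of_succ_lt hb⟩ t = 0 := by
  by_cases hta : (t : ℕ) = a
  · have e : t = ⟨a, Nat.lt_of_succ_lt ha⟩ := Fin.ext hta
    rw [e]; exact colA a ha _
  · have h := jd_mixed Δ anti a ha b hb hab ⟨b+1, hb⟩ t
    rw [if_neg (show t ≠ (⟨b, Nat.lt_of_succ_lt hb⟩ : Fin n) from fun hh => ht (by rw [hh])),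
      if_pos rfl, if_neg (Fin.ne_of_val_ne (show b + 1 ≠ a + 1 by omega)),
      if_neg (show t ≠ (⟨a, Nat.lt_of_succ_lt ha⟩ : Fin n) from fun hh => hta (by rw [hh])),
      zero_add, add_zero, add_zero] at h
    exact h

lemma jd_C3 (anti : AntiP Δ) (colA : ColAP Δ) (a : ℕ) (ha : a + 1 < n) (b : ℕ)
    (hb : b + 1 < n) (hab : a + 2 ≤ b ∨ b + 2 ≤ a) :
    Dmat n K J Δ a ha ⟨a+1, ha⟩ ⟨b+1, hb⟩ = 0 := by
  have h := jd_mixed Δ anti a ha b hb hab ⟨a+1, ha⟩ ⟨b, Nat.lt_of_succ_lt hb⟩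
  rw [if_pos rfl, if_neg (Fin.ne_of_val_ne (show a + 1 ≠ b + 1 by omega)), if_pos rfl,
    if_neg (Fin.ne_of_val_ne (show b ≠ a by omega)), colA b hb, add_zero, add_zero,
    add_zero] at h
  exact h

lemma jd_Cdiag (anti : AntiP Δ) (a : ℕ) (ha : a + 1 < n) (b : ℕ) (hb : b + 1 < n)
    (hab : a + 2 ≤ b ∨ b + 2 ≤ a) :
    Dmat n K J Δ a ha ⟨b+1, hb⟩ ⟨b+1, hb⟩
      + Dmat n K J Δ a ha ⟨b, Nat.lt_of_succ_lt hb⟩ ⟨b, Nat.lt_of_succ_lt hb⟩ = 0 := by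
  have h := jd_mixed Δ anti a ha b hb hab ⟨b+1, hb⟩ ⟨b, Nat.lt_of_succ_lt hb⟩
  rw [if_pos rfl, if_pos rfl, if_neg (Fin.ne_of_val_ne (show b + 1 ≠ a + 1 by omega)),
    if_neg (Fin.ne_of_val_ne (show b ≠ a by omega)), add_zero, add_zero] at h
  exact h

lemma jd_hG (jordm : JordP Δ) (a : ℕ) (h2 : a + 1 + 1 < n) :
    (↑(Δ (gsub n K J a h2)) : Matrix (Fin n) (Fin n) K)
      = Dmat n K J Δ a (Nat.lt_of_succ_lt h2) * (fsub n K J (a+1) h2)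
        + (fsub n K J (a+1) h2 : Matrix (Fin n) (Fin n) K)
            * Dmat n K J Δ a (Nat.lt_of_succ_lt h2)
        + (fsub n K J a (Nat.lt_of_succ_lt h2) : Matrix (Fin n) (Fin n) K)
            * Dmat n K J Δ (a+1) h2
        + Dmat n K J Δ (a+1) h2 * (fsub n K J a (Nat.lt_of_succ_lt h2)) := by
  refine jordm _ _ _ ?_
  rw [fsub_val, fsub_val, gsub_val,
    Matrix.single_mul_single_of_ne (h := Fin.ne_of_val_ne (show a ≠ a + 1 + 1 by omega)),
    Matrix.single_mul_single_same, one_mul, zero_add]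

lemma jd_Gapply (jordm : JordP Δ) (a : ℕ) (h2 : a + 1 + 1 < n) (s t : Fin n) :
    (↑(Δ (gsub n K J a h2)) : Matrix (Fin n) (Fin n) K) s t
      = (if t = (⟨a+1, Nat.lt_of_succ_lt h2⟩ : Fin n)
          then Dmat n K J Δ a (Nat.lt_of_succ_lt h2) s ⟨a+1+1, h2⟩ else 0)
      + (if s = (⟨a+1+1, h2⟩ : Fin n)
          then Dmat n K J Δ a (Nat.lt_of_succ_lt h2) ⟨a+1, Nat.lt_of_succ_lt h2⟩ t else 0)
      + (if s = (⟨a+1, Nat.lt_of_succ_lt h2⟩ : Fin n)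
          then Dmat n K J Δ (a+1) h2 ⟨a, Nat.lt_of_succ_lt (Nat.lt_of_succ_lt h2)⟩ t else 0)
      + (if t = (⟨a, Nat.lt_of_succ_lt (Nat.lt_of_succ_lt h2)⟩ : Fin n)
          then Dmat n K J Δ (a+1) h2 s ⟨a+1, Nat.lt_of_succ_lt h2⟩ else 0) := by
  have h := jd_hG Δ jordm a h2
  rw [fsub_val, fsub_val] at h
  have h3 := congrFun (congrFun h s) t
  simp only [Matrix.add_apply, mul_E_apply, E_mul_apply] at h3
  exact h3

lemma jd_colA2 (htf : ∀ a : K, a + a = 0 → a = 0) (anti : AntiP Δ) (jordm : JordP Δ)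
    (colA : ColAP Δ) (a : ℕ) (h2 : a + 1 + 1 < n) (s : Fin n) :
    Dmat n K J Δ a (Nat.lt_of_succ_lt h2) s ⟨a+1+1, h2⟩ = 0 := by
  have ne1 : (⟨a, Nat.lt_of_succ_lt (Nat.lt_of_succ_lt h2)⟩ : Fin n)
      ≠ ⟨a+1, Nat.lt_of_succ_lt h2⟩ := Fin.ne_of_val_ne (show a ≠ a + 1 by omega)
  have ne2 : (⟨a, Nat.lt_of_succ_lt (Nat.lt_of_succ_lt h2)⟩ : Fin n)
      ≠ ⟨a+1+1, h2⟩ := Fin.ne_of_val_ne (show a ≠ a + 1 + 1 by omega)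
  have ne3 : (⟨a+1, Nat.lt_of_succ_lt h2⟩ : Fin n)
      ≠ ⟨a, Nat.lt_of_succ_lt (Nat.lt_of_succ_lt h2)⟩ :=
    Fin.ne_of_val_ne (show a + 1 ≠ a by omega)
  have hGaa : (↑(Δ (gsub n K J a h2)) : Matrix (Fin n) (Fin n) K)
      ⟨a, Nat.lt_of_succ_lt (Nat.lt_of_succ_lt h2)⟩
      ⟨a, Nat.lt_of_succ_lt (Nat.lt_of_succ_lt h2)⟩ = 0 := by
    rw [jd_Gapply Δ jordm a h2, if_neg ne1, if_neg ne2, if_pos rfl, colA (a+1) h2]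
    simp
  have hGsa1 : ∀ u : Fin n,
      (↑(Δ (gsub n K J a h2)) : Matrix (Fin n) (Fin n) K) u ⟨a+1, Nat.lt_of_succ_lt h2⟩
        = Dmat n K J Δ a (Nat.lt_of_succ_lt h2) u ⟨a+1+1, h2⟩ := by
    intro u
    rw [jd_Gapply Δ jordm a h2, if_pos rfl, if_neg ne3,
      jd_colA1 Δ htf anti colA a (Nat.lt_of_succ_lt h2), colA (a+1) h2]
    simp
  have hz : (fsub n K J a (Nat.lt_of_succ_lt h2) : Matrix (Fin n) (Fin n) K)
        * (gsub n K J a h2)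
      + (gsub n K J a h2 : Matrix (Fin n) (Fin n) K)
        * (fsub n K J a (Nat.lt_of_succ_lt h2)) = 0 := by
    rw [fsub_val, gsub_val,
      Matrix.single_mul_single_of_ne (h := Fin.ne_of_val_ne (show a ≠ a+1+1 by omega)),
      Matrix.single_mul_single_of_ne (h := Fin.ne_of_val_ne (show a ≠ a+1 by omega)),
      add_zero]
  have h := anti (fsub n K J a (Nat.lt_of_succ_lt h2)) (gsub n K J a h2) hz
  rw [fsub_val, gsub_val] at h
  have h3 := congrFun (congrFun h s) ⟨a, Nat.lt_of_succ_lt (Nat.lt_of_succ_lt h2)⟩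
  simp only [Matrix.add_apply, Matrix.zero_apply, mul_E_apply, E_mul_apply, if_true] at h3
  rw [hGsa1 s, hGaa] at h3
  simp only [jd_rowA Δ htf anti colA a (Nat.lt_of_succ_lt h2), ite_self, add_zero] at h3
  exact htf _ h3

lemma jd_rowPrev (htf : ∀ a : K, a + a = 0 → a = 0) (anti : AntiP Δ) (jordm : JordP Δ)
    (colA : ColAP Δ) (a : ℕ) (h2 : a + 1 + 1 < n) (t : Fin n) :
    Dmat n K J Δ (a+1) h2 ⟨a, Nat.lt_of_succ_lt (Nat.lt_of_succ_lt h2)⟩ t = 0 := by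
  have ne2 : (⟨a+1, Nat.lt_of_succ_lt h2⟩ : Fin n) ≠ ⟨a+1+1, h2⟩ :=
    Fin.ne_of_val_ne (show a + 1 ≠ a + 1 + 1 by omega)
  have ne4 : (⟨a+1+1, h2⟩ : Fin n) ≠ ⟨a+1, Nat.lt_of_succ_lt h2⟩ :=
    Fin.ne_of_val_ne (show a + 1 + 1 ≠ a + 1 by omega)
  have ne5 : (⟨a+1+1, h2⟩ : Fin n) ≠ ⟨a, Nat.lt_of_succ_lt (Nat.lt_of_succ_lt h2)⟩ :=
    Fin.ne_of_val_ne (show a + 1 + 1 ≠ a by omega)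
  have hGt : ∀ u : Fin n,
      (↑(Δ (gsub n K J a h2)) : Matrix (Fin n) (Fin n) K) ⟨a+1, Nat.lt_of_succ_lt h2⟩ u
        = Dmat n K J Δ (a+1) h2 ⟨a, Nat.lt_of_succ_lt (Nat.lt_of_succ_lt h2)⟩ u := by
    intro u
    rw [jd_Gapply Δ jordm a h2, if_pos rfl, if_neg ne2,
      jd_colA2 Δ htf anti jordm colA a h2 ⟨a+1, Nat.lt_of_succ_lt h2⟩,
      jd_rowA Δ htf anti colA (a+1) h2 ⟨a+1, Nat.lt_of_succ_lt h2⟩]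
    simp
  have hGcc : (↑(Δ (gsub n K J a h2)) : Matrix (Fin n) (Fin n) K)
      ⟨a+1+1, h2⟩ ⟨a+1+1, h2⟩ = 0 := by
    rw [jd_Gapply Δ jordm a h2, if_neg ne4, if_pos rfl, if_neg ne5,
      jd_colA2 Δ htf anti jordm colA a h2 ⟨a+1, Nat.lt_of_succ_lt h2⟩]
    simp
  have hz : (fsub n K J (a+1) h2 : Matrix (Fin n) (Fin n) K) * (gsub n K J a h2)
      + (gsub n K J a h2 : Matrix (Fin n) (Fin n) K) * (fsub n K J (a+1) h2) = 0 := by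
    rw [fsub_val, gsub_val,
      Matrix.single_mul_single_of_ne (h := Fin.ne_of_val_ne (show a+1 ≠ a+1+1 by omega)),
      Matrix.single_mul_single_of_ne (h := Fin.ne_of_val_ne (show a ≠ a+1+1 by omega)),
      add_zero]
  have h := anti (fsub n K J (a+1) h2) (gsub n K J a h2) hz
  rw [fsub_val, gsub_val] at h
  have h3 := congrFun (congrFun h ⟨a+1+1, h2⟩) t
  simp only [Matrix.add_apply, Matrix.zero_apply, mul_E_apply, E_mul_apply, if_true] at h3
  rw [hGt t, hGcc] at h3
  simp only [jd_colA1 Δ htf anti colA (a+1) h2, ite_self, add_zero, zero_add] at h3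
  exact htf _ h3

lemma jd_diagHigh (htf : ∀ a : K, a + a = 0 → a = 0) (anti : AntiP Δ) (jordm : JordP Δ)
    (colA : ColAP Δ) :
    ∀ (j a : ℕ) (ha : a + 1 < n) (hj : a + 1 + 1 + j < n),
      Dmat n K J Δ a ha ⟨a+1+1+j, hj⟩ ⟨a+1+1+j, hj⟩ = 0 := by
  intro j
  induction j with
  | zero =>
    intro a ha hj
    exact jd_colA2 Δ htf anti jordm colA a hj ⟨a+1+1, hj⟩
  | succ j ih =>
    intro a ha hj
    have h := jd_Cdiag Δ anti a ha (a+1+1+j) (by omega) (Or.inl (by omega))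
    rw [ih a ha (by omega), add_zero] at h
    exact h

lemma jd_diagLow (htf : ∀ a : K, a + a = 0 → a = 0) (anti : AntiP Δ) (jordm : JordP Δ)
    (colA : ColAP Δ) :
    ∀ (j a : ℕ) (ha : a + 1 < n) (hj : j ≤ a),
      Dmat n K J Δ a ha ⟨a - j, Nat.lt_of_le_of_lt (Nat.sub_le a j) (Nat.lt_of_succ_lt ha)⟩
        ⟨a - j, Nat.lt_of_le_of_lt (Nat.sub_le a j) (Nat.lt_of_succ_lt ha)⟩ = 0 := by
  intro j
  induction j with
  | zero =>
    intro a ha hj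
    exact jd_rowA Δ htf anti colA a ha _
  | succ j ih =>
    intro a ha hj
    rcases Nat.eq_zero_or_pos j with rfl | hj0
    · obtain ⟨a', rfl⟩ : ∃ a', a = a' + 1 := ⟨a - 1, by omega⟩
      exact jd_rowPrev Δ htf anti jordm colA a' ha _
    · have h := jd_Cdiag Δ anti a ha (a - (j+1)) (by omega) (Or.inr (by omega))
      have e : (⟨a - (j+1) + 1, by omega⟩ : Fin n)
          = ⟨a - j, Nat.lt_of_le_of_lt (Nat.sub_le a j) (Nat.lt_of_succ_lt ha)⟩ :=
        Fin.ext (show a - (j+1) + 1 = a - j by omega)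
      rw [e, ih a ha (by omega), zero_add] at h
      exact h

lemma jd_diag (htf : ∀ a : K, a + a = 0 → a = 0) (anti : AntiP Δ) (jordm : JordP Δ)
    (colA : ColAP Δ) (a : ℕ) (ha : a + 1 < n) (s : Fin n) :
    Dmat n K J Δ a ha s s = 0 := by
  obtain ⟨s, hs⟩ := s
  rcases Nat.lt_or_ge s (a+1) with h | h
  · have hd := jd_diagLow Δ htf anti jordm colA (a - s) a ha (by omega)
    have e : (⟨a - (a - s), Nat.lt_of_le_of_lt (Nat.sub_le a (a-s)) (Nat.lt_of_succ_lt ha)⟩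
        : Fin n) = ⟨s, hs⟩ := Fin.ext (show a - (a - s) = s by omega)
    rw [e] at hd
    exact hd
  · rcases Nat.lt_or_ge s (a+2) with h' | h'
    · have e : s = a + 1 := by omega
      subst e
      exact jd_colA1 Δ htf anti colA a ha _
    · have hd := jd_diagHigh Δ htf anti jordm colA (s - (a+1+1)) a ha (by omega)
      have e : (⟨a + 1 + 1 + (s - (a+1+1)), by omega⟩ : Fin n) = ⟨s, hs⟩ :=
        Fin.ext (show a + 1 + 1 + (s - (a+1+1)) = s by omega)
      rw [e] at hd
      exact hd

lemma jd_master (htf : ∀ a : K, a + a = 0 → a = 0) (anti : AntiP Δ) (jordm : JordP Δ)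
    (colA : ColAP Δ) (entA : EntAP Δ) (a : ℕ) (ha : a + 1 < n) (s t : Fin n)
    (hst : ¬((s : ℕ) = n - 1 ∧ (t : ℕ) = 0)) :
    Dmat n K J Δ a ha s t = 0 := by
  obtain ⟨s, hs⟩ := s
  obtain ⟨t, ht⟩ := t
  have hst' : ¬(s = n - 1 ∧ t = 0) := hst
  by_cases h1 : t = a
  · subst h1; exact colA _ ha _
  by_cases h2 : t = a + 1
  · subst h2; exact jd_colA1 Δ htf anti colA a ha _
  by_cases h3 : t = a + 1 + 1
  · subst h3
    exact jd_colA2 Δ htf anti jordm colA a ht ⟨s, hs⟩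
  by_cases h4 : s = a
  · subst h4; exact jd_rowA Δ htf anti colA _ ha _
  by_cases h5 : s + 1 = a
  · subst h5; exact jd_rowPrev Δ htf anti jordm colA s ha _
  by_cases h6 : s = t
  · subst h6; exact jd_diag Δ htf anti jordm colA a ha ⟨s, hs⟩
  by_cases h7 : s = a + 1
  · subst h7
    by_cases h8 : t = 0
    · subst h8; exact entA a ha
    · obtain ⟨b, rfl⟩ : ∃ b, t = b + 1 := ⟨t - 1, by omega⟩
      exact jd_C3 Δ anti colA a ha b ht (by omega)
  by_cases h9 : t = 0
  · subst h9
    have hsn : s + 1 < n := by omega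
    exact jd_C2 Δ anti colA a ha s hsn (by omega) ⟨0, ht⟩ (show (0:ℕ) ≠ s by omega)
  · obtain ⟨b, rfl⟩ : ∃ b, t = b + 1 := ⟨t - 1, by omega⟩
    exact jd_C1 Δ anti a ha b ht (by omega) ⟨s, hs⟩ (show s ≠ a + 1 by omega) (show s ≠ b + 1 by omega)

lemma jd_Dform (htf : ∀ a : K, a + a = 0 → a = 0) (anti : AntiP Δ) (jordm : JordP Δ)
    (colA : ColAP Δ) (entA : EntAP Δ) (a : ℕ) (ha : a + 1 < n) :
    Dmat n K J Δ a ha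
      = Matrix.single (⟨n-1, by omega⟩ : Fin n) ⟨0, by omega⟩
          (Dmat n K J Δ a ha ⟨n-1, by omega⟩ ⟨0, by omega⟩) := by
  ext s t
  rw [E_apply]
  by_cases hpos : (⟨n-1, by omega⟩ : Fin n) = s ∧ (⟨0, by omega⟩ : Fin n) = t
  · obtain ⟨hs', ht'⟩ := hpos
    rw [if_pos ⟨hs', ht'⟩, ← hs', ← ht']
  · rw [if_neg hpos]
    refine jd_master Δ htf anti jordm colA entA a ha s t ?_
    rintro ⟨u1, u2⟩
    exact hpos ⟨Fin.ext u1.symm, Fin.ext u2.symm⟩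

/-- the matrix unit `e_{r,c}` (with `c < r`) as an element of `R_n(K,J)`. -/
def esub (n : ℕ) (K : Type) [Ring K] (J : TwoSidedIdeal K) (r c : ℕ) (hr : r < n)
    (hcr : c < r) : ↥(Rset n K J) :=
  ⟨Matrix.single ⟨r, hr⟩ ⟨c, Nat.lt_trans hcr hr⟩ 1,
    stdBasis_mem_lower (by rw [Fin.lt_def]; omega) 1⟩

lemma esub_val (n : ℕ) (K : Type) [Ring K] (J : TwoSidedIdeal K) (r c : ℕ) (hr : r < n)
    (hcr : c < r) : (esub n K J r c hr hcr : Matrix (Fin n) (Fin n) K)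
      = Matrix.single (⟨r, hr⟩ : Fin n) ⟨c, Nat.lt_trans hcr hr⟩ 1 := rfl

lemma jd_goal4 (hn : 4 ≤ n) (jordm : JordP Δ)
    (hDf : ∀ (a : ℕ) (ha : a + 1 < n), ∃ lam : K, Dmat n K J Δ a ha
      = Matrix.single (⟨n-1, by omega⟩ : Fin n) ⟨0, by omega⟩ lam) :
    ∀ (d r c : ℕ) (hr : r < n) (hrc : r = c + 1 + 1 + d),
      Δ (esub n K J r c hr (by omega)) = 0 := by
  intro d
  induction d with
  | zero =>
    intro r c hr hrc
    subst hrc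
    have hc1 : c + 1 < n := by omega
    have hc2 : c + 1 + 1 < n := by omega
    have hprod : (fsub n K J c hc1 : Matrix (Fin n) (Fin n) K) * (fsub n K J (c+1) hc2)
        + (fsub n K J (c+1) hc2 : Matrix (Fin n) (Fin n) K) * (fsub n K J c hc1)
        = (esub n K J (c+1+1+0) c hr (by omega) : Matrix (Fin n) (Fin n) K) := by
      rw [fsub_val, fsub_val, esub_val,
        Matrix.single_mul_single_of_ne
          (h := Fin.ne_of_val_ne (show c ≠ c + 1 + 1 by omega)),
        Matrix.single_mul_single_same, one_mul, zero_add]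
    have hj := jordm _ _ _ hprod
    obtain ⟨l1, hl1⟩ := hDf c (by omega)
    obtain ⟨l2, hl2⟩ := hDf (c+1) hc2
    simp only [hl1, hl2] at hj
    rw [fsub_val, fsub_val,
      Matrix.single_mul_single_of_ne
        (h := Fin.ne_of_val_ne (show 0 ≠ c + 1 + 1 by omega)),
      Matrix.single_mul_single_of_ne
        (h := Fin.ne_of_val_ne (show c + 1 ≠ n - 1 by omega)),
      Matrix.single_mul_single_of_ne
        (h := Fin.ne_of_val_ne (show c ≠ n - 1 by omega)),
      Matrix.single_mul_single_of_ne
        (h := Fin.ne_of_val_ne (show 0 ≠ c + 1 by omega))] at hj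
    simp only [add_zero, zero_add] at hj
    exact Subtype.ext (by simpa using hj)
  | succ d ih =>
    intro r c hr hrc
    subst hrc
    have hr' : c + 1 + 1 + d < n := by omega
    have hr'' : c + 1 + 1 + d + 1 < n := by omega
    have hprev := ih (c+1+1+d) c hr' rfl
    have hprev' : (↑(Δ (esub n K J (c+1+1+d) c hr' (by omega)))
        : Matrix (Fin n) (Fin n) K) = 0 := by rw [hprev]; rfl
    have hprod : (fsub n K J (c+1+1+d) hr'' : Matrix (Fin n) (Fin n) K)
          * (esub n K J (c+1+1+d) c hr' (by omega))
        + (esub n K J (c+1+1+d) c hr' (by omega) : Matrix (Fin n) (Fin n) K)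
          * (fsub n K J (c+1+1+d) hr'')
        = (esub n K J (c+1+1+(d+1)) c hr (by omega) : Matrix (Fin n) (Fin n) K) := by
      rw [fsub_val, esub_val, esub_val,
        Matrix.single_mul_single_same, one_mul,
        Matrix.single_mul_single_of_ne
          (h := Fin.ne_of_val_ne (show c ≠ c + 1 + 1 + d + 1 by omega)), add_zero]
      rfl
    have hj := jordm _ _ _ hprod
    obtain ⟨l1, hl1⟩ := hDf (c+1+1+d) hr''
    simp only [hl1, hprev'] at hj
    rw [fsub_val, esub_val,
      Matrix.single_mul_single_of_ne
        (h := Fin.ne_of_val_ne (show 0 ≠ c + 1 + 1 + d by omega)),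
      Matrix.single_mul_single_of_ne
        (h := Fin.ne_of_val_ne (show c ≠ n - 1 by omega))] at hj
    simp only [add_zero, zero_add, mul_zero, zero_mul] at hj
    exact Subtype.ext (by simpa using hj)

end JDlemmas

/-- if the `i`-th column and the `(i+1,1)` entry of each `Δ(e_{i+1,i})`
vanish, then `Δ(e_{2,1}) = 0`, `Δ(e_{n,n-1}) = 0`,
`Δ(e_{i+1,i}) = Δ^{i+1,i}_{n,1}(1) e_{n,1}` for `1 < i < n-1`, and `Δ(e_{i,j}) = 0`
whenever `i - j > 1`. -/
theorem images_of_units (n : ℕ) (hn : 4 ≤ n) (K : Type) [Ring K]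
    (htf : ∀ a : K, a + a = 0 → a = 0) (J : TwoSidedIdeal K)
    (Δ : ↥(Rset n K J) → ↥(Rset n K J))
    (hadd : ∀ a b : ↥(Rset n K J), Δ (a + b) = Δ a + Δ b)
    (hjord : ∀ a b : ↥(Rset n K J),
      Δ (a * b + b * a) = Δ a * b + b * Δ a + a * Δ b + Δ b * a)
    (hcol : ∀ (c : Fin n) (hc : (c : ℕ) + 1 < n), ∀ s : Fin n,
      (↑(Δ ⟨Matrix.single (⟨(c : ℕ) + 1, hc⟩ : Fin n) c (1 : K),
          stdBasis_mem_lower (by simp only [Fin.lt_def]; omega) 1⟩) :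
        Matrix (Fin n) (Fin n) K) s c = 0)
    (hent : ∀ (c : Fin n) (hc : (c : ℕ) + 1 < n),
      (↑(Δ ⟨Matrix.single (⟨(c : ℕ) + 1, hc⟩ : Fin n) c (1 : K),
          stdBasis_mem_lower (by simp only [Fin.lt_def]; omega) 1⟩) :
        Matrix (Fin n) (Fin n) K) (⟨(c : ℕ) + 1, hc⟩ : Fin n) ⟨0, by omega⟩ = 0) :
    (Δ ⟨Matrix.single (⟨1, by omega⟩ : Fin n) ⟨0, by omega⟩ (1 : K),
        stdBasis_mem_lower (by simp only [Fin.lt_def]; omega) 1⟩ = 0) ∧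
    (Δ ⟨Matrix.single (⟨n - 1, by omega⟩ : Fin n) ⟨n - 2, by omega⟩ (1 : K),
        stdBasis_mem_lower (by simp only [Fin.lt_def]; omega) 1⟩ = 0) ∧
    (∀ (c : Fin n) (hc1 : 1 ≤ (c : ℕ)) (hc2 : (c : ℕ) < n - 2),
      (↑(Δ ⟨Matrix.single (⟨(c : ℕ) + 1, by omega⟩ : Fin n) c (1 : K),
          stdBasis_mem_lower (by simp only [Fin.lt_def]; omega) 1⟩) :
        Matrix (Fin n) (Fin n) K) =
        Matrix.single (⟨n - 1, by omega⟩ : Fin n) ⟨0, by omega⟩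
          ((↑(Δ ⟨Matrix.single (⟨(c : ℕ) + 1, by omega⟩ : Fin n) c (1 : K),
              stdBasis_mem_lower (by simp only [Fin.lt_def]; omega) 1⟩) :
            Matrix (Fin n) (Fin n) K) ⟨n - 1, by omega⟩ ⟨0, by omega⟩)) ∧
    (∀ (r c : Fin n) (hrc : (c : ℕ) + 1 < (r : ℕ)),
      Δ ⟨Matrix.single r c (1 : K),
          stdBasis_mem_lower (by simp only [Fin.lt_def]; omega) 1⟩ = 0) := by
  have hΔ0 : Δ 0 = 0 := by
    have h := hadd 0 0
    rw [add_zero] at h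
    exact (add_eq_left.mp h.symm)
  have anti : AntiP Δ := by
    intro x y h
    have h0 : x * y + y * x = 0 := by ext1; push_cast; exact h
    have h1 := hjord x y
    rw [h0, hΔ0] at h1
    have h2 := congrArg (fun z : ↥(Rset n K J) => (z : Matrix (Fin n) (Fin n) K)) h1
    push_cast at h2
    exact h2.symm
  have jordm : JordP Δ := by
    intro x y z h
    have h0 : x * y + y * x = z := by ext1; push_cast; exact h
    have h1 := hjord x y
    rw [h0] at h1
    have h2 := congrArg (fun w : ↥(Rset n K J) => (w : Matrix (Fin n) (Fin n) K)) h1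
    push_cast at h2
    exact h2
  have colA : ColAP Δ := fun a ha s => hcol ⟨a, Nat.lt_of_succ_lt ha⟩ ha s
  have entA : EntAP Δ := fun a ha => hent ⟨a, Nat.lt_of_succ_lt ha⟩ ha
  have hDf := jd_Dform Δ htf anti jordm colA entA
  refine ⟨?_, ?_, ?_, ?_⟩
  · -- `Δ(e_{2,1}) = 0`
    have h01 : (0:ℕ) + 1 < n := by omega
    have hD0 : Dmat n K J Δ 0 h01 = 0 := by
      rw [hDf 0 h01, colA 0 h01 ⟨n-1, by omega⟩]
      exact Matrix.single_zero _ _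
    exact Subtype.ext hD0
  · -- `Δ(e_{n,n-1}) = 0`
    have hn2 : (n-2) + 1 < n := by omega
    have hDn2 : Dmat n K J Δ (n-2) hn2 = 0 := by
      rw [hDf (n-2) hn2]
      have e : (⟨n-2+1, hn2⟩ : Fin n) = ⟨n-1, by omega⟩ :=
        Fin.ext (show n-2+1 = n-1 by omega)
      have h := entA (n-2) hn2
      rw [e] at h
      rw [h]
      exact Matrix.single_zero _ _
    have he : (⟨Matrix.single (⟨n-1, by omega⟩ : Fin n) ⟨n-2, by omega⟩ (1:K),
        stdBasis_mem_lower (by simp only [Fin.lt_def]; omega) 1⟩ : ↥(Rset n K J))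
        = fsub n K J (n-2) hn2 := by
      apply Subtype.ext
      rw [fsub_val]
      have e2 : (⟨n-1, (by omega : n-1 < n)⟩ : Fin n) = ⟨n-2+1, hn2⟩ :=
        Fin.ext (show n-1 = n-2+1 by omega)
      rw [← e2]
    rw [he]
    exact Subtype.ext hDn2
  · -- middle generators
    intro c hc1 hc2
    exact hDf (c : ℕ) (by omega)
  · -- `Δ(e_{r,c}) = 0` for `r > c + 1`
    intro r c hrc
    exact jd_goal4 Δ hn jordm (fun a ha => ⟨_, hDf a ha⟩)
      ((r:ℕ) - (c:ℕ) - 2) (r:ℕ) (c:ℕ) r.isLt (by omega)
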